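/- Let G be a finite simple graph in which every vertex has degree exactly 2, let {u1,v1} and {u2,v2} be edges of G with u1, v1, u2, v2 pairwise distinct and with neither {u1,u2} nor {v1,v2} an edge of G, and let G' be the result of the two-switch on these edges. Suppose u1 and u2 lie in the same connected component of G, and v1 and v2 lie in the same connected component of the induced subgraph of G on V \ {u1, u2}. Then every vertex of G' has degree exactly 2; in G' the vertices u1 and v1 lie in different connected components, with u2 in the component of u1 and v2 in the component of v1; and every vertex of the connected component of u1 in G lies either in the G'-component of u1 or in the G'-component of v1. -/

import Mathlib

open SimpleGraph Finset
open scoped Classical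

/-- The result of the two-switch on the edges `{u1,v1}` and `{u2,v2}` of `G`:
these two edges are deleted and the edges `{u1,u2}` and `{v1,v2}` are inserted. -/
def twoSwitch {V : Type*} (G : SimpleGraph V) (u1 v1 u2 v2 : V) : SimpleGraph V :=
  SimpleGraph.fromEdgeSet ((G.edgeSet \ {s(u1, v1), s(u2, v2)}) ∪ {s(u1, u2), s(v1, v2)})

lemma head_ne_getLast' {α : Type*} {l : List α} (h : l.Nodup) (h2 : 2 ≤ l.length)
    (hne : l ≠ []) : l.head hne ≠ l.getLast hne := by
  match l, h, h2 with
  | a :: b :: t, h, _ =>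
    simp only [List.head_cons]
    rw [List.getLast_cons (by simp : (b :: t) ≠ [])]
    intro heq
    have : a ∈ b :: t := heq ▸ List.getLast_mem (by simp)
    exact (List.nodup_cons.mp h).1 this

lemma walk_closure' {V : Type*} {H : SimpleGraph V} {S : Set V}
    (hS : ∀ x y, x ∈ S → H.Adj x y → y ∈ S) {a b : V} (w : H.Walk a b) (ha : a ∈ S) : b ∈ S := by
  induction w with
  | nil => exact ha
  | cons h p ih => exact ih (hS _ _ ha h)

lemma cycle_support_closed' {V : Type*} [Fintype V] {H : SimpleGraph V}
    (hdeg : ∀ v, H.degree v = 2) {a : V} {c : H.Walk a a} (hc : c.IsCycle)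
    {x y : V} (hx : x ∈ c.support) (hadj : H.Adj x y) : y ∈ c.support := by
  set c' := c.rotate x hx with hc'def
  have hc' : c'.IsCycle := hc.rotate hx
  have hlen : 3 ≤ c'.length := hc'.three_le_length
  have hne : c'.darts ≠ [] := by
    intro h
    have := c'.length_darts
    rw [h] at this
    simp at this
    omega
  set d1 := c'.darts.head hne with hd1
  set d2 := c'.darts.getLast hne with hd2
  have hd1f : d1.fst = x := by rw [hd1, Walk.head_darts_eq_firstDart]; simp [Walk.firstDart]
  have hd2s : d2.snd = x := by rw [hd2, Walk.getLast_darts_eq_lastDart]; simp [Walk.lastDart]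
  have hd1mem : d1 ∈ c'.darts := List.head_mem hne
  have hd2mem : d2 ∈ c'.darts := List.getLast_mem hne
  have he1 : d1.edge = s(x, d1.snd) :=
    SimpleGraph.dart_edge_eq_mk'_iff'.mpr (Or.inl ⟨hd1f, rfl⟩)
  have he2 : d2.edge = s(x, d2.fst) :=
    SimpleGraph.dart_edge_eq_mk'_iff'.mpr (Or.inr ⟨rfl, hd2s⟩)
  have he1m : s(x, d1.snd) ∈ c'.edges := he1 ▸ List.mem_map_of_mem hd1mem
  have he2m : s(x, d2.fst) ∈ c'.edges := he2 ▸ List.mem_map_of_mem hd2mem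
  have hadj1 : H.Adj x d1.snd := hd1f ▸ d1.adj
  have hadj2 : H.Adj x d2.fst := (hd2s ▸ d2.adj).symm
  have hmapne : c'.darts.map SimpleGraph.Dart.edge ≠ [] := by simpa using hne
  have hhead := List.head_map hmapne
  have hlast := List.getLast_map hmapne
  have hnodup : (c'.darts.map SimpleGraph.Dart.edge).Nodup := hc'.edges_nodup
  have hlen2 : 2 ≤ (c'.darts.map SimpleGraph.Dart.edge).length := by
    rw [List.length_map, c'.length_darts]; omega
  have hedgene : d1.edge ≠ d2.edge := by
    rw [hd1, hd2, ← hhead, ← hlast]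
    exact head_ne_getLast' hnodup hlen2 hmapne
  have hnd : d1.snd ≠ d2.fst := by
    intro h
    apply hedgene
    rw [he1, he2, h]
  have hsub : ({d1.snd, d2.fst} : Finset V) ⊆ H.neighborFinset x := by
    intro z hz
    simp only [Finset.mem_insert, Finset.mem_singleton] at hz
    rcases hz with rfl | rfl
    · exact (H.mem_neighborFinset x _).mpr hadj1
    · exact (H.mem_neighborFinset x _).mpr hadj2
  have hNeq : H.neighborFinset x = {d1.snd, d2.fst} := by
    refine (Finset.eq_of_subset_of_card_le hsub ?_).symm
    rw [Finset.card_pair hnd]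
    exact le_of_eq (hdeg x)
  have hy : y ∈ ({d1.snd, d2.fst} : Finset V) := by
    rw [← hNeq, H.mem_neighborFinset]; exact hadj
  simp only [Finset.mem_insert, Finset.mem_singleton] at hy
  have hperm := c.rotate_edges x hx
  rcases hy with rfl | rfl
  · exact c.snd_mem_support_of_mem_edges (hperm.mem_iff.mp he1m)
  · exact c.snd_mem_support_of_mem_edges (hperm.mem_iff.mp he2m)

theorem stmt_6 {V : Type*} [Fintype V] (G : SimpleGraph V)
    (hdeg : ∀ v : V, G.degree v = 2)
    (u1 v1 u2 v2 : V)
    (h1 : G.Adj u1 v1) (h2 : G.Adj u2 v2)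
    (hd12 : u1 ≠ v1) (hd13 : u1 ≠ u2) (hd14 : u1 ≠ v2)
    (hd23 : v1 ≠ u2) (hd24 : v1 ≠ v2) (hd34 : u2 ≠ v2)
    (hnu : ¬ G.Adj u1 u2) (hnv : ¬ G.Adj v1 v2)
    (hcomp : G.Reachable u1 u2)
    (hsame : ∀ (hv1 : v1 ∈ ({u1, u2}ᶜ : Set V)) (hv2 : v2 ∈ ({u1, u2}ᶜ : Set V)),
      (G.induce ({u1, u2}ᶜ : Set V)).Reachable ⟨v1, hv1⟩ ⟨v2, hv2⟩) :
    (∀ v : V, (twoSwitch G u1 v1 u2 v2).degree v = 2) ∧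
    ¬ (twoSwitch G u1 v1 u2 v2).Reachable u1 v1 ∧
    (twoSwitch G u1 v1 u2 v2).Reachable u1 u2 ∧
    (twoSwitch G u1 v1 u2 v2).Reachable v1 v2 ∧
    ∀ x : V, G.Reachable u1 x →
      ((twoSwitch G u1 v1 u2 v2).Reachable u1 x ∨ (twoSwitch G u1 v1 u2 v2).Reachable v1 x) := by
  set G' := twoSwitch G u1 v1 u2 v2 with hG'
  have hadj : ∀ a b : V, G'.Adj a b ↔
      ((G.Adj a b ∧ s(a,b) ≠ s(u1,v1) ∧ s(a,b) ≠ s(u2,v2)) ∨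
        s(a,b) = s(u1,u2) ∨ s(a,b) = s(v1,v2)) := by
    intro a b
    rw [hG']
    simp only [twoSwitch, fromEdgeSet_adj, Set.mem_union, Set.mem_diff,
      Set.mem_insert_iff, Set.mem_singleton_iff, mem_edgeSet, not_or]
    constructor
    · rintro ⟨h, -⟩
      tauto
    · intro h
      refine ⟨by tauto, ?_⟩
      rcases h with ⟨h, -⟩ | h | h
      · exact h.ne
      · rw [Sym2.eq_iff] at h
        rcases h with ⟨rfl, rfl⟩ | ⟨rfl, rfl⟩
        · exact hd13
        · exact hd13.symm
      · rw [Sym2.eq_iff] at h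
        rcases h with ⟨rfl, rfl⟩ | ⟨rfl, rfl⟩
        · exact hd24
        · exact hd24.symm
  have hA1 : G'.Adj u1 u2 := (hadj _ _).mpr (Or.inr (Or.inl rfl))
  have hA2 : G'.Adj v1 v2 := (hadj _ _).mpr (Or.inr (Or.inr rfl))
  -- degrees
  have hdeg' : ∀ v : V, G'.degree v = 2 := by
    intro v
    by_cases e1 : v = u1
    · subst e1
      have hN : G'.neighborFinset v = insert u2 ((G.neighborFinset v).erase v1) := by
        ext b
        simp only [mem_neighborFinset, hadj, Finset.mem_insert, Finset.mem_erase,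
          mem_neighborFinset, Sym2.eq_iff]
        aesop
      rw [SimpleGraph.degree, hN, Finset.card_insert_of_notMem, Finset.card_erase_of_mem,
        ← SimpleGraph.degree, hdeg]
      · exact (G.mem_neighborFinset _ _).mpr h1
      · intro hmem
        exact hnu ((G.mem_neighborFinset _ _).mp (Finset.mem_of_mem_erase hmem))
    · by_cases e2 : v = v1
      · subst e2
        have hN : G'.neighborFinset v = insert v2 ((G.neighborFinset v).erase u1) := by
          ext b
          simp only [mem_neighborFinset, hadj, Finset.mem_insert, Finset.mem_erase,
            mem_neighborFinset, Sym2.eq_iff]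
          aesop
        rw [SimpleGraph.degree, hN, Finset.card_insert_of_notMem, Finset.card_erase_of_mem,
          ← SimpleGraph.degree, hdeg]
        · exact (G.mem_neighborFinset _ _).mpr h1.symm
        · intro hmem
          exact hnv ((G.mem_neighborFinset _ _).mp (Finset.mem_of_mem_erase hmem))
      · by_cases e3 : v = u2
        · subst e3
          have hN : G'.neighborFinset v = insert u1 ((G.neighborFinset v).erase v2) := by
            ext b
            simp only [mem_neighborFinset, hadj, Finset.mem_insert, Finset.mem_erase,
              mem_neighborFinset, Sym2.eq_iff]
            aesop
          rw [SimpleGraph.degree, hN, Finset.card_insert_of_notMem, Finset.card_erase_of_mem,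
            ← SimpleGraph.degree, hdeg]
          · exact (G.mem_neighborFinset _ _).mpr h2
          · intro hmem
            exact hnu ((G.mem_neighborFinset _ _).mp (Finset.mem_of_mem_erase hmem)).symm
        · by_cases e4 : v = v2
          · subst e4
            have hN : G'.neighborFinset v = insert v1 ((G.neighborFinset v).erase u2) := by
              ext b
              simp only [mem_neighborFinset, hadj, Finset.mem_insert, Finset.mem_erase,
                mem_neighborFinset, Sym2.eq_iff]
              aesop
            rw [SimpleGraph.degree, hN, Finset.card_insert_of_notMem, Finset.card_erase_of_mem,
              ← SimpleGraph.degree, hdeg]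
            · exact (G.mem_neighborFinset _ _).mpr h2.symm
            · intro hmem
              exact hnv ((G.mem_neighborFinset _ _).mp (Finset.mem_of_mem_erase hmem)).symm
          · have hN : G'.neighborFinset v = G.neighborFinset v := by
              ext b
              simp only [mem_neighborFinset, hadj, Sym2.eq_iff]
              aesop
            rw [SimpleGraph.degree, hN, ← SimpleGraph.degree, hdeg]
  refine ⟨hdeg', ?_, hA1.reachable, hA2.reachable, ?_⟩
  · -- ¬ Reachable u1 v1 : build a cycle through v1 avoiding u1
    have hv1m : v1 ∈ ({u1, u2}ᶜ : Set V) := by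
      simp only [Set.mem_compl_iff, Set.mem_insert_iff, Set.mem_singleton_iff, not_or]
      exact ⟨hd12.symm, hd23⟩
    have hv2m : v2 ∈ ({u1, u2}ᶜ : Set V) := by
      simp only [Set.mem_compl_iff, Set.mem_insert_iff, Set.mem_singleton_iff, not_or]
      exact ⟨hd14.symm, hd34.symm⟩
    obtain ⟨w0⟩ := hsame hv1m hv2m
    let w1 : G.Walk v1 v2 :=
      w0.map (SimpleGraph.Embedding.induce ({u1, u2}ᶜ : Set V)).toHom
    have hw1supp : ∀ z ∈ w1.support, z ∈ ({u1, u2}ᶜ : Set V) := by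
      intro z hz
      have hz' : z ∈ w0.support.map (SimpleGraph.Embedding.induce (G := G) ({u1, u2}ᶜ : Set V)).toHom := by
        rw [← Walk.support_map]; exact hz
      obtain ⟨z', -, rfl⟩ := List.mem_map.mp hz'
      exact z'.2
    have hw1e : ∀ e ∈ w1.edges, e ∈ G'.edgeSet := by
      intro e he
      have heG : e ∈ G.edgeSet := w1.edges_subset_edgeSet he
      have hne1 : e ≠ s(u1, v1) := by
        rintro rfl
        exact (hw1supp u1 (w1.fst_mem_support_of_mem_edges he)) (by simp)
      have hne2 : e ≠ s(u2, v2) := by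
        rintro rfl
        exact (hw1supp u2 (w1.fst_mem_support_of_mem_edges he)) (by simp)
      rw [hG', twoSwitch, edgeSet_fromEdgeSet]
      refine ⟨Or.inl ⟨heG, ?_⟩, ?_⟩
      · rintro (h | h)
        · exact hne1 h
        · exact hne2 h
      · exact G.not_isDiag_of_mem_edgeSet heG
    let w2 : G'.Walk v1 v2 := w1.transfer G' hw1e
    let p := w2.bypass
    have hp : p.IsPath := w2.bypass_isPath
    have hqpath : p.reverse.IsPath := hp.reverse
    have hpe : ∀ e ∈ p.edges, e ∈ G.edgeSet := by
      intro e he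
      have h2' : e ∈ w2.edges := w2.edges_bypass_subset he
      rw [Walk.edges_transfer] at h2'
      exact w1.edges_subset_edgeSet h2'
    have hps : ∀ z ∈ p.support, z ∈ ({u1, u2}ᶜ : Set V) := by
      intro z hz
      have h2' : z ∈ w2.support := w2.support_bypass_subset hz
      rw [Walk.support_transfer] at h2'
      exact hw1supp z h2'
    have hnotedge : s(v1, v2) ∉ p.reverse.edges := by
      rw [Walk.edges_reverse]
      intro h
      exact hnv (hpe _ (List.mem_reverse.mp h))
    have hcyc : (Walk.cons hA2 p.reverse).IsCycle :=
      (Walk.cons_isCycle_iff p.reverse hA2).mpr ⟨hqpath, hnotedge⟩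
    have hu1notin : u1 ∉ (Walk.cons hA2 p.reverse).support := by
      rw [Walk.support_cons]
      intro h
      rcases List.mem_cons.mp h with h | h
      · exact hd12 h
      · rw [Walk.support_reverse] at h
        exact (hps u1 (List.mem_reverse.mp h)) (by simp)
    intro hr
    exact hu1notin (walk_closure'
      (S := {z | z ∈ (Walk.cons hA2 p.reverse).support})
      (fun x y hx hxy => cycle_support_closed' hdeg' hcyc hx hxy)
      hr.symm.some (Walk.start_mem_support _))
  · -- part 5
    intro x hx
    have hSclosed : ∀ a b, a ∈ {z | G'.Reachable u1 z ∨ G'.Reachable v1 z} → G.Adj a b →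
        b ∈ {z | G'.Reachable u1 z ∨ G'.Reachable v1 z} := by
      intro a b ha hab
      by_cases hG'ab : G'.Adj a b
      · rcases ha with h | h
        · exact Or.inl (h.trans hG'ab.reachable)
        · exact Or.inr (h.trans hG'ab.reachable)
      · have hor : s(a,b) = s(u1,v1) ∨ s(a,b) = s(u2,v2) := by
          by_contra hc
          push_neg at hc
          exact hG'ab ((hadj a b).mpr (Or.inl ⟨hab, hc.1, hc.2⟩))
        rcases hor with h | h
        · rw [Sym2.eq_iff] at h
          rcases h with ⟨rfl, rfl⟩ | ⟨rfl, rfl⟩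
          · exact Or.inr (Reachable.refl _)
          · exact Or.inl (Reachable.refl _)
        · rw [Sym2.eq_iff] at h
          rcases h with ⟨rfl, rfl⟩ | ⟨rfl, rfl⟩
          · exact Or.inr hA2.reachable
          · exact Or.inl hA1.reachable
    exact walk_closure' hSclosed hx.some (Or.inl (Reachable.refl u1))
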